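/- Let X ⊆ ℝ^n be compact and let S ⊆ X be closed. Then there exists a sequence of polynomial functions (w_k) on ℝ^n such that w_k(x) ≥ 1_S(x) for all x ∈ X and all k, and ∫_X |w_k(x) − 1_S(x)| dλ(x) → 0 as k → ∞, where λ is the Lebesgue measure on ℝ^n and 1_S is the indicator function of S. Equivalently, for every ε > 0 there is a polynomial w with w ≥ 1_S on X and ∫_X (w − 1_S) dλ ≤ ε. -/

import Mathlib

open MeasureTheory Filter Metric
open scoped Topology ENNReal

/-- Key step: for every `ε > 0` there is a polynomial `p` with `1_S ≤ p` on `X`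
and `∫_X (p - 1_S) ≤ ε`. -/
lemma poly_approx_indicator_key (n : ℕ)
    (X : Set (Fin n → ℝ)) (hX : IsCompact X)
    (S : Set (Fin n → ℝ)) (hSX : S ⊆ X) (hS : IsClosed S)
    (ε : ℝ) (hε : 0 < ε) :
    ∃ p : MvPolynomial (Fin n) ℝ,
      (∀ x ∈ X, Set.indicator S (fun _ => (1 : ℝ)) x ≤ MvPolynomial.eval x p) ∧
      (∫ x in X, (MvPolynomial.eval x p - Set.indicator S (fun _ => (1 : ℝ)) x)) ≤ ε := by
  classical
  have hScpt : IsCompact S := hX.of_isClosed_subset hS hSX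
  have hXm : MeasurableSet X := hX.isClosed.measurableSet
  have hSm : MeasurableSet S := hS.measurableSet
  have hXfin : volume X ≠ ∞ := hX.measure_lt_top.ne
  have hSfin : volume S ≠ ∞ := hScpt.measure_lt_top.ne
  -- step 1 : choose δ > 0 with `volume (thickening δ S \ S) ≤ ε/3`
  have hthickfin : volume (thickening 1 S) ≠ ∞ := by
    have : Bornology.IsBounded (thickening 1 S) := hScpt.isBounded.thickening
    exact this.measure_lt_top.ne
  have htend := tendsto_measure_thickening_of_isClosed
    (μ := volume) ⟨1, one_pos, hthickfin⟩ hS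
  have hlt : volume S < volume S + ENNReal.ofReal (ε / 3) :=
    ENNReal.lt_add_right hSfin (ENNReal.ofReal_pos.mpr (by linarith)).ne'
  have hev : ∀ᶠ δ in 𝓝[>] (0:ℝ),
      volume (thickening δ S) < volume S + ENNReal.ofReal (ε / 3) :=
    htend.eventually_lt_const hlt
  obtain ⟨δ, hδmem, hδ⟩ := (hev.and self_mem_nhdsWithin).exists
  have hδpos : 0 < δ := hδ
  have hDsmall : volume (thickening δ S \ S) ≤ ENNReal.ofReal (ε / 3) := by
    rw [measure_diff (self_subset_thickening hδpos S) hSm.nullMeasurableSet hSfin]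
    exact tsub_le_iff_left.mpr hδmem.le
  -- the continuous function sandwiched between the indicators
  set g : (Fin n → ℝ) → ℝ := fun x => (thickenedIndicator hδpos S x : ℝ) with hg
  have hgcont : Continuous g :=
    NNReal.continuous_coe.comp (thickenedIndicator hδpos S).continuous
  have hg_le_one : ∀ x, g x ≤ 1 := fun x => by
    exact_mod_cast thickenedIndicator_le_one hδpos S x
  have hg_nonneg : ∀ x, 0 ≤ g x := fun x => (thickenedIndicator hδpos S x).2
  have hg_one : ∀ x ∈ S, g x = 1 := fun x hx => by
    show ((thickenedIndicator hδpos S) x : ℝ) = 1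
    rw [thickenedIndicator_one hδpos S hx]; norm_num
  have hg_zero : ∀ x ∉ thickening δ S, g x = 0 := fun x hx => by
    show ((thickenedIndicator hδpos S) x : ℝ) = 0
    rw [thickenedIndicator_zero hδpos S hx]; norm_num
  have hind_le_g : ∀ x, Set.indicator S (fun _ => (1:ℝ)) x ≤ g x := by
    intro x
    by_cases hx : x ∈ S
    · simp [Set.indicator_of_mem hx, hg_one x hx]
    · simp [Set.indicator_of_notMem hx, hg_nonneg x]
  -- step 2 : Stone-Weierstrass on the compact set X
  have : CompactSpace ↥X := isCompact_iff_compactSpace.mp hX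
  set coords : Fin n → C(↥X, ℝ) := fun i =>
    ⟨fun x => (x : Fin n → ℝ) i, (continuous_apply i).comp continuous_subtype_val⟩ with hcoords
  set A : Subalgebra ℝ C(↥X, ℝ) := (MvPolynomial.aeval coords).range with hA
  have hsep : A.SeparatesPoints := by
    intro x y hxy
    have hxy' : (x : Fin n → ℝ) ≠ (y : Fin n → ℝ) := fun h => hxy (Subtype.ext h)
    obtain ⟨i, hi⟩ := Function.ne_iff.mp hxy'
    have h : MvPolynomial.aeval (R := ℝ) coords (MvPolynomial.X i) = coords i :=
      MvPolynomial.aeval_X coords i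
    refine ⟨⇑(coords i), ⟨coords i, ?_, rfl⟩, ?_⟩
    · rw [hA, ← h]
      exact AlgHom.mem_range_self (MvPolynomial.aeval (R := ℝ) coords) (MvPolynomial.X i)
    · simpa [hcoords] using hi
  set M : ℝ := (volume X).toReal with hM
  have hMnonneg : 0 ≤ M := ENNReal.toReal_nonneg
  set η : ℝ := ε / (3 * (M + 1)) with hη
  have hηpos : 0 < η := by
    apply div_pos hε
    nlinarith
  obtain ⟨⟨q, hqA⟩, hq⟩ := ContinuousMap.exists_mem_subalgebra_near_continuous_of_separatesPoints
    A hsep (fun x : ↥X => g x) (hgcont.comp continuous_subtype_val) η hηpos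
  obtain ⟨p₀, hp₀⟩ := hqA
  -- evaluating the polynomial continuous map pointwise
  have heval : ∀ x : ↥X, q x = MvPolynomial.eval (x : Fin n → ℝ) p₀ := by
    intro x
    have h1 : (ContinuousMap.evalAlgHom ℝ ℝ x) (MvPolynomial.aeval coords p₀)
        = MvPolynomial.aeval (fun i => coords i x) p₀ :=
      MvPolynomial.comp_aeval_apply _ _ _
    have h2 : MvPolynomial.aeval (fun i => coords i x) p₀
        = MvPolynomial.eval (fun i => coords i x) p₀ := by
      rw [← MvPolynomial.coe_aeval_eq_eval]; rfl
    rw [← hp₀]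
    simpa [hcoords] using h1.trans h2
  have hqnear : ∀ x ∈ X, |MvPolynomial.eval x p₀ - g x| < η := by
    intro x hx
    have := hq ⟨x, hx⟩
    rw [heval ⟨x, hx⟩] at this
    simpa [Real.norm_eq_abs] using this
  -- the polynomial
  refine ⟨p₀ + MvPolynomial.C η, ?_, ?_⟩
  · intro x hx
    have h1 := hqnear x hx
    have h2 := hind_le_g x
    have : g x - η < MvPolynomial.eval x p₀ := by
      have := (abs_lt.mp h1).1; linarith
    simp only [map_add, MvPolynomial.eval_C]
    linarith
  · -- integral bound
    set D : Set (Fin n → ℝ) := thickening δ S \ S with hD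
    have hDm : MeasurableSet D := isOpen_thickening.measurableSet.diff hSm
    have hptwise : ∀ x ∈ X,
        MvPolynomial.eval x (p₀ + MvPolynomial.C η) - Set.indicator S (fun _ => (1:ℝ)) x
          ≤ 2 * η + Set.indicator D (fun _ => (1:ℝ)) x := by
      intro x hx
      have h1 := (abs_lt.mp (hqnear x hx)).2
      have h2 : g x - Set.indicator S (fun _ => (1:ℝ)) x ≤ Set.indicator D (fun _ => (1:ℝ)) x := by
        by_cases hxS : x ∈ S
        · have : x ∉ D := fun h => h.2 hxS
          simp [Set.indicator_of_mem hxS, hg_one x hxS, Set.indicator_of_notMem this]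
        · by_cases hxT : x ∈ thickening δ S
          · have hxD : x ∈ D := ⟨hxT, hxS⟩
            simp [Set.indicator_of_notMem hxS, Set.indicator_of_mem hxD, hg_le_one x]
          · have hxD : x ∉ D := fun h => hxT h.1
            simp [Set.indicator_of_notMem hxS, Set.indicator_of_notMem hxD, hg_zero x hxT]
      simp only [map_add, MvPolynomial.eval_C]
      linarith
    -- integrability
    have hint_p : IntegrableOn (fun x => MvPolynomial.eval x (p₀ + MvPolynomial.C η)) X := by
      exact ((MvPolynomial.continuous_eval _).continuousOn).integrableOn_compact hX
    have hint_ind : IntegrableOn (Set.indicator S (fun _ => (1:ℝ))) X := by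
      have : Integrable (Set.indicator S (fun _ => (1:ℝ))) volume := by
        rw [integrable_indicator_iff hSm]
        exact (integrableOn_const_iff).mpr (Or.inr hScpt.measure_lt_top)
      exact this.integrableOn
    have hint_indD : IntegrableOn (Set.indicator D (fun _ => (1:ℝ))) X := by
      have hDfin : volume D < ∞ :=
        lt_of_le_of_lt (measure_mono Set.diff_subset)
          hScpt.isBounded.thickening.measure_lt_top
      have : Integrable (Set.indicator D (fun _ => (1:ℝ))) volume := by
        rw [integrable_indicator_iff hDm]
        exact (integrableOn_const_iff).mpr (Or.inr hDfin)
      exact this.integrableOn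
    have hint_c : IntegrableOn (fun _ => 2*η) X (volume) :=
      (integrableOn_const_iff).mpr (Or.inr hX.measure_lt_top)
    have hmono := setIntegral_mono_on (hint_p.sub hint_ind)
      (hint_c.add hint_indD) hXm hptwise
    refine le_trans hmono ?_
    simp only [Pi.add_apply]
    rw [integral_add hint_c hint_indD]
    have hI1 : (∫ _ in X, (2*η)) = (volume X).toReal * (2*η) := by
      simp [integral_const, measureReal_def]
    have hI2 : (∫ x in X, Set.indicator D (fun _ => (1:ℝ)) x) ≤ ε / 3 := by
      rw [setIntegral_indicator hDm]
      rw [setIntegral_const]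
      simp only [smul_eq_mul, mul_one]
      have h1 : volume (X ∩ D) ≤ ENNReal.ofReal (ε/3) :=
        le_trans (measure_mono Set.inter_subset_right) hDsmall
      exact ENNReal.toReal_le_of_le_ofReal (by linarith) h1
    have hηe : η * (3*(M+1)) = ε := by
      rw [hη]; field_simp
    have hI3 : (volume X).toReal * (2*η) ≤ 2 * ε / 3 := by
      rw [← hM]
      nlinarith [mul_nonneg hMnonneg hηpos.le]
    rw [hI1]
    linarith

/-- Polynomial upper approximation of the indicator function of a closed subset `S` of a
compact set `X` in `L¹(X)` norm: there is a sequence of polynomials `w_k ≥ 1_S` on `X`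
with `∫_X |w_k − 1_S| dλ → 0`. -/
theorem poly_approx_indicator (n : ℕ) (hn : 1 ≤ n)
    (X : Set (Fin n → ℝ)) (hX : IsCompact X)
    (S : Set (Fin n → ℝ)) (hSX : S ⊆ X) (hS : IsClosed S) :
    ∃ w : ℕ → (Fin n → ℝ) → ℝ,
      (∀ k, ∃ p : MvPolynomial (Fin n) ℝ, ∀ x, w k x = MvPolynomial.eval x p) ∧
      (∀ k, ∀ x ∈ X, Set.indicator S (fun _ => (1 : ℝ)) x ≤ w k x) ∧
      Tendsto (fun k => ∫ x in X, |w k x - Set.indicator S (fun _ => (1 : ℝ)) x|)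
        atTop (𝓝 0) := by
  have hXm : MeasurableSet X := hX.isClosed.measurableSet
  have key : ∀ k : ℕ, ∃ p : MvPolynomial (Fin n) ℝ,
      (∀ x ∈ X, Set.indicator S (fun _ => (1 : ℝ)) x ≤ MvPolynomial.eval x p) ∧
      (∫ x in X, (MvPolynomial.eval x p - Set.indicator S (fun _ => (1 : ℝ)) x))
        ≤ 1 / (k + 1) := fun k =>
    poly_approx_indicator_key n X hX S hSX hS (1 / (k+1)) (by positivity)
  choose p hp1 hp2 using key
  refine ⟨fun k x => MvPolynomial.eval x (p k), fun k => ⟨p k, fun _ => rfl⟩,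
    fun k x hx => hp1 k x hx, ?_⟩
  apply squeeze_zero (fun k => integral_nonneg fun x => abs_nonneg _) ?_
    tendsto_one_div_add_atTop_nhds_zero_nat
  intro k
  have habs : ∀ x ∈ X,
      |MvPolynomial.eval x (p k) - Set.indicator S (fun _ => (1 : ℝ)) x|
        = MvPolynomial.eval x (p k) - Set.indicator S (fun _ => (1 : ℝ)) x := fun x hx =>
    abs_of_nonneg (sub_nonneg.mpr (hp1 k x hx))
  rw [setIntegral_congr_fun hXm habs]
  exact hp2 k
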